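/- arXiv:2506.03514 — 4 statements merged into one kernel-verified Lean document; each statement's English description precedes it below -/
import Mathlib

section
/- Let δ ∈ [0,1] and let ψ ∈ ℂ² be a unit vector with |⟨e₀, ψ⟩| = q. Then for every unit vector ω ∈ ℂ² satisfying the significance constraint |⟨e₀, ω⟩|² ≥ 1 − δ, the type II error satisfies |⟨ω, ψ⟩|² ≥ (max(0, q·√(1−δ) − √(1−q²)·√δ))². -/
open scoped InnerProductSpace

noncomputable def e : Fin 2 → EuclideanSpace ℂ (Fin 2) := fun i => EuclideanSpace.single i 1

theorem stmt0 (δ : ℝ) (hδ : δ ∈ Set.Icc (0:ℝ) 1)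
    (ψ : EuclideanSpace ℂ (Fin 2)) (hψ : ‖ψ‖ = 1) (q : ℝ)
    (hq : ‖⟪e 0, ψ⟫_ℂ‖ = q)
    (ω : EuclideanSpace ℂ (Fin 2)) (hω : ‖ω‖ = 1)
    (hsig : ‖⟪e 0, ω⟫_ℂ‖ ^ 2 ≥ 1 - δ) :
    ‖⟪ω, ψ⟫_ℂ‖ ^ 2 ≥
      (max 0 (q * Real.sqrt (1 - δ) - Real.sqrt (1 - q ^ 2) * Real.sqrt δ)) ^ 2 := by
  obtain ⟨hδ0, hδ1⟩ := hδ
  have he0ψ : ⟪e 0, ψ⟫_ℂ = ψ 0 := by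
    simp [e, EuclideanSpace.inner_single_left]
  have he0ω : ⟪e 0, ω⟫_ℂ = ω 0 := by
    simp [e, EuclideanSpace.inner_single_left]
  rw [he0ψ] at hq
  rw [he0ω] at hsig
  -- norms
  have hnψ : ‖ψ 0‖^2 + ‖ψ 1‖^2 = 1 := by
    have := hψ
    rw [EuclideanSpace.norm_eq] at this
    have h2 : Real.sqrt (∑ i : Fin 2, ‖ψ i‖ ^ 2) = 1 := this
    have : (∑ i : Fin 2, ‖ψ i‖ ^ 2) = 1 := by
      have hnn : (0:ℝ) ≤ ∑ i : Fin 2, ‖ψ i‖ ^ 2 :=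
        Finset.sum_nonneg fun i _ => sq_nonneg _
      nlinarith [Real.sq_sqrt hnn]
    simpa [Fin.sum_univ_two] using this
  have hnω : ‖ω 0‖^2 + ‖ω 1‖^2 = 1 := by
    have := hω
    rw [EuclideanSpace.norm_eq] at this
    have : (∑ i : Fin 2, ‖ω i‖ ^ 2) = 1 := by
      have hnn : (0:ℝ) ≤ ∑ i : Fin 2, ‖ω i‖ ^ 2 :=
        Finset.sum_nonneg fun i _ => sq_nonneg _
      nlinarith [Real.sq_sqrt hnn]
    simpa [Fin.sum_univ_two] using this
  set a := ‖ω 0‖ with ha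
  set b := ‖ω 1‖ with hb
  set d := ‖ψ 1‖ with hd
  have hq0 : 0 ≤ q := hq ▸ norm_nonneg _
  have ha0 : 0 ≤ a := norm_nonneg _
  have hb0 : 0 ≤ b := norm_nonneg _
  have hd0 : 0 ≤ d := norm_nonneg _
  -- inner product expansion
  have hinner : ⟪ω, ψ⟫_ℂ = (starRingEnd ℂ) (ω 0) * ψ 0 + (starRingEnd ℂ) (ω 1) * ψ 1 := by
    simp [PiLp.inner_apply, Fin.sum_univ_two, RCLike.inner_apply, mul_comm]
  -- lower bound on |⟨ω,ψ⟩|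
  have hlow : ‖⟪ω, ψ⟫_ℂ‖ ≥ a * q - b * d := by
    rw [hinner]
    have h1 : ‖(starRingEnd ℂ) (ω 0) * ψ 0‖ = a * q := by
      rw [norm_mul, Complex.norm_conj, hq]
    have h2 : ‖(starRingEnd ℂ) (ω 1) * ψ 1‖ = b * d := by
      rw [norm_mul, Complex.norm_conj]
    set A := (starRingEnd ℂ) (ω 0) * ψ 0
    set B := (starRingEnd ℂ) (ω 1) * ψ 1
    have h3 : ‖A‖ ≤ ‖A + B‖ + ‖B‖ := by
      have := norm_add_le (A + B) (-B)
      simpa using this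
    linarith
  -- a ≥ √(1-δ)
  have hasq : a ≥ Real.sqrt (1 - δ) := by
    have := Real.sqrt_le_sqrt hsig
    rwa [Real.sqrt_sq ha0] at this
  -- b ≤ √δ
  have hbsq : b ≤ Real.sqrt δ := by
    have hb2 : b^2 ≤ δ := by nlinarith
    have := Real.sqrt_le_sqrt hb2
    rwa [Real.sqrt_sq hb0] at this
  -- d = √(1-q²)
  have hdq : d = Real.sqrt (1 - q^2) := by
    have : d^2 = 1 - q^2 := by rw [hq] at hnψ; linarith
    rw [← this, Real.sqrt_sq hd0]
  have hKnn : 0 ≤ ‖⟪ω, ψ⟫_ℂ‖ := norm_nonneg _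
  have hKt : ‖⟪ω, ψ⟫_ℂ‖ ≥ q * Real.sqrt (1 - δ) - Real.sqrt (1 - q^2) * Real.sqrt δ := by
    have h1 : a * q ≥ Real.sqrt (1 - δ) * q := by
      apply mul_le_mul_of_nonneg_right hasq hq0
    have h2 : b * d ≤ Real.sqrt δ * Real.sqrt (1 - q^2) := by
      rw [hdq]
      apply mul_le_mul_of_nonneg_right hbsq (Real.sqrt_nonneg _)
    nlinarith
  have hmax : ‖⟪ω, ψ⟫_ℂ‖ ≥ max 0 (q * Real.sqrt (1 - δ) - Real.sqrt (1 - q^2) * Real.sqrt δ) :=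
    max_le hKnn hKt
  have := pow_le_pow_left₀ (le_max_left 0 _) hmax 2
  exact this
end

section
/- Let δ ∈ [0,1] and let ψ ∈ ℂ² be a unit vector with |⟨e₀, ψ⟩| = q. Then there exists a unit vector ω ∈ ℂ² with |⟨e₀, ω⟩|² ≥ 1 − δ such that |⟨ω, ψ⟩|² = (max(0, q·√(1−δ) − √(1−q²)·√δ))²; in particular, if q ≤ √δ the minimal type II error is 0, and if q > √δ it equals (q·√(1−δ) − √(1−q²)·√δ)². -/
open scoped InnerProductSpace

lemma aux_le (δ q : ℝ) (hδ0 : 0 ≤ δ) (hδ1 : δ ≤ 1) (hq0 : 0 ≤ q)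
    (h : q ≤ Real.sqrt δ) :
    q * Real.sqrt (1 - δ) - Real.sqrt (1 - q ^ 2) * Real.sqrt δ ≤ 0 := by
  have hq2 : q ^ 2 ≤ δ := by
    have := Real.sq_sqrt hδ0
    nlinarith [Real.sqrt_nonneg δ]
  have h1 : q * Real.sqrt (1 - δ) = Real.sqrt (q ^ 2 * (1 - δ)) := by
    rw [Real.sqrt_mul (by positivity), Real.sqrt_sq hq0]
  have h2 : Real.sqrt (1 - q ^ 2) * Real.sqrt δ = Real.sqrt ((1 - q ^ 2) * δ) := by
    rw [Real.sqrt_mul (by nlinarith)]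
  have h3 : Real.sqrt (q ^ 2 * (1 - δ)) ≤ Real.sqrt ((1 - q ^ 2) * δ) := by
    apply Real.sqrt_le_sqrt; nlinarith
  rw [h1, h2]; linarith

lemma aux_ge (δ q : ℝ) (hδ0 : 0 ≤ δ) (hδ1 : δ ≤ 1) (hq1 : q ≤ 1)
    (h : Real.sqrt δ < q) :
    0 ≤ q * Real.sqrt (1 - δ) - Real.sqrt (1 - q ^ 2) * Real.sqrt δ := by
  have hq0 : 0 ≤ q := le_trans (Real.sqrt_nonneg δ) h.le
  have hq2 : δ ≤ q ^ 2 := by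
    have := Real.sq_sqrt hδ0
    nlinarith [Real.sqrt_nonneg δ]
  have h1 : q * Real.sqrt (1 - δ) = Real.sqrt (q ^ 2 * (1 - δ)) := by
    rw [Real.sqrt_mul (by positivity), Real.sqrt_sq hq0]
  have h2 : Real.sqrt (1 - q ^ 2) * Real.sqrt δ = Real.sqrt ((1 - q ^ 2) * δ) := by
    rw [Real.sqrt_mul (by nlinarith)]
  have h3 : Real.sqrt ((1 - q ^ 2) * δ) ≤ Real.sqrt (q ^ 2 * (1 - δ)) := by
    apply Real.sqrt_le_sqrt; nlinarith
  rw [h1, h2]; linarith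

lemma conj_phase_mul (z : ℂ) (hz : z ≠ 0) :
    (starRingEnd ℂ) (z / ‖z‖) * z = (‖z‖ : ℂ) := by
  have hne : (‖z‖ : ℂ) ≠ 0 := by
    simpa using norm_ne_zero_iff.mpr hz
  rw [map_div₀, Complex.conj_ofReal, div_mul_eq_mul_div, mul_comm, Complex.mul_conj',
    sq, mul_div_assoc, div_self hne, mul_one]

theorem stmt1 (δ : ℝ) (hδ : δ ∈ Set.Icc (0:ℝ) 1)
    (ψ : EuclideanSpace ℂ (Fin 2)) (hψ : ‖ψ‖ = 1) (q : ℝ)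
    (hq : ‖⟪e 0, ψ⟫_ℂ‖ = q) :
    ∃ ω : EuclideanSpace ℂ (Fin 2), ‖ω‖ = 1 ∧
      (‖⟪e 0, ω⟫_ℂ‖) ^ 2 ≥ 1 - δ ∧
      (‖⟪ω, ψ⟫_ℂ‖) ^ 2 =
        (max 0 (q * Real.sqrt (1 - δ) - Real.sqrt (1 - q ^ 2) * Real.sqrt δ)) ^ 2 ∧
      (q ≤ Real.sqrt δ →
        (max 0 (q * Real.sqrt (1 - δ) - Real.sqrt (1 - q ^ 2) * Real.sqrt δ)) ^ 2 = 0) ∧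
      (Real.sqrt δ < q →
        (max 0 (q * Real.sqrt (1 - δ) - Real.sqrt (1 - q ^ 2) * Real.sqrt δ)) ^ 2 =
          (q * Real.sqrt (1 - δ) - Real.sqrt (1 - q ^ 2) * Real.sqrt δ) ^ 2) := by
  obtain ⟨hδ0, hδ1⟩ := hδ
  have hinner : ⟪e 0, ψ⟫_ℂ = ψ 0 := by
    simp [e, EuclideanSpace.inner_single_left]
  have hq0 : 0 ≤ q := hq ▸ norm_nonneg _
  have habs0 : ‖ψ 0‖ = q := by rw [← hq, hinner]
  have hnormsq : ‖ψ 0‖ ^ 2 + ‖ψ 1‖ ^ 2 = 1 := by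
    rw [EuclideanSpace.norm_eq, Real.sqrt_eq_one, Fin.sum_univ_two] at hψ
    simpa using hψ
  have habs1 : ‖ψ 1‖ ^ 2 = 1 - q ^ 2 := by
    rw [habs0] at hnormsq; linarith
  have hq1 : q ≤ 1 := by nlinarith [norm_nonneg (ψ 1), sq_nonneg (‖ψ 1‖)]
  have habs1' : ‖ψ 1‖ = Real.sqrt (1 - q ^ 2) := by
    rw [← habs1, Real.sqrt_sq (norm_nonneg _)]
  rcases le_or_gt q (Real.sqrt δ) with hcase | hcase
  · -- q ≤ √δ : take ω orthogonal to ψ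
    have hmax : max 0 (q * Real.sqrt (1 - δ) - Real.sqrt (1 - q ^ 2) * Real.sqrt δ) = 0 :=
      max_eq_left (aux_le δ q hδ0 hδ1 hq0 hcase)
    have hq2 : q ^ 2 ≤ δ := by
      have := Real.sq_sqrt hδ0
      nlinarith [Real.sqrt_nonneg δ]
    set ω : EuclideanSpace ℂ (Fin 2) :=
      (WithLp.equiv 2 (Fin 2 → ℂ)).symm ![-(starRingEnd ℂ) (ψ 1), (starRingEnd ℂ) (ψ 0)] with hω
    have h0 : ω 0 = -(starRingEnd ℂ) (ψ 1) := rfl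
    have h1 : ω 1 = (starRingEnd ℂ) (ψ 0) := rfl
    refine ⟨ω, ?_, ?_, ?_, ?_, ?_⟩
    · rw [EuclideanSpace.norm_eq, Real.sqrt_eq_one, Fin.sum_univ_two, h0, h1]
      simp only [norm_neg, Complex.norm_conj]
      rw [habs0]
      linarith [habs1]
    · have hin : ⟪e 0, ω⟫_ℂ = ω 0 := by
        simp [e, EuclideanSpace.inner_single_left]
      rw [hin, h0]
      simp only [map_neg, Complex.norm_conj, norm_neg]
      rw [habs1]
      linarith
    · have hin2 : ⟪ω, ψ⟫_ℂ = (starRingEnd ℂ) (ω 0) * ψ 0 + (starRingEnd ℂ) (ω 1) * ψ 1 := by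
        rw [PiLp.inner_apply, Fin.sum_univ_two]; simp only [RCLike.inner_apply]; ring
      have hin3 : ⟪ω, ψ⟫_ℂ = 0 := by
        rw [hin2, h0, h1]; simp; ring
      rw [hin3, hmax]; simp
    · intro _; rw [hmax]; ring
    · intro h; exact absurd h (not_lt.mpr hcase)
  · -- √δ < q
    have hqpos : 0 < q := lt_of_le_of_lt (Real.sqrt_nonneg δ) hcase
    have hψ0ne : ψ 0 ≠ 0 := by
      intro h; rw [h] at habs0; simp at habs0; linarith
    have hmax : max 0 (q * Real.sqrt (1 - δ) - Real.sqrt (1 - q ^ 2) * Real.sqrt δ) =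
        q * Real.sqrt (1 - δ) - Real.sqrt (1 - q ^ 2) * Real.sqrt δ :=
      max_eq_right (aux_ge δ q hδ0 hδ1 hq1 hcase)
    set u : ℂ := ψ 0 / ‖ψ 0‖ with hu
    set v : ℂ := if ψ 1 = 0 then 1 else ψ 1 / ‖ψ 1‖ with hv
    have huabs : ‖u‖ = 1 := by
      rw [hu, norm_div, Complex.norm_real, norm_norm,
        div_self (norm_ne_zero_iff.mpr hψ0ne)]
    have hvabs : ‖v‖ = 1 := by
      rw [hv]; split_ifs with h
      · simp
      · rw [norm_div, Complex.norm_real, norm_norm, div_self (norm_ne_zero_iff.mpr h)]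
    have hcu : (starRingEnd ℂ) u * ψ 0 = (‖ψ 0‖ : ℂ) :=
      conj_phase_mul _ hψ0ne
    have hcv : (starRingEnd ℂ) v * ψ 1 = (‖ψ 1‖ : ℂ) := by
      rw [hv]; split_ifs with h
      · simp [h]
      · exact conj_phase_mul _ h
    set ω : EuclideanSpace ℂ (Fin 2) :=
      (WithLp.equiv 2 (Fin 2 → ℂ)).symm
        ![(Real.sqrt (1 - δ) : ℂ) * u, -(Real.sqrt δ : ℂ) * v] with hω
    have h0 : ω 0 = (Real.sqrt (1 - δ) : ℂ) * u := rfl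
    have h1 : ω 1 = -(Real.sqrt δ : ℂ) * v := rfl
    refine ⟨ω, ?_, ?_, ?_, ?_, ?_⟩
    · rw [EuclideanSpace.norm_eq, Real.sqrt_eq_one, Fin.sum_univ_two, h0, h1]
      simp only [norm_mul, norm_neg, Complex.norm_real, Real.norm_eq_abs,
        huabs, hvabs, mul_one]
      rw [abs_of_nonneg (Real.sqrt_nonneg _), abs_of_nonneg (Real.sqrt_nonneg _),
        Real.sq_sqrt (by linarith), Real.sq_sqrt hδ0]
      ring
    · have hin : ⟪e 0, ω⟫_ℂ = ω 0 := by
        simp [e, EuclideanSpace.inner_single_left]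
      rw [hin, h0]
      rw [norm_mul, huabs, mul_one, Complex.norm_real, Real.norm_eq_abs,
        abs_of_nonneg (Real.sqrt_nonneg _), Real.sq_sqrt (by linarith)]
    · have hin2 : ⟪ω, ψ⟫_ℂ = (starRingEnd ℂ) (ω 0) * ψ 0 + (starRingEnd ℂ) (ω 1) * ψ 1 := by
        rw [PiLp.inner_apply, Fin.sum_univ_two]; simp only [RCLike.inner_apply]; ring
      have hval : ⟪ω, ψ⟫_ℂ =
          ((q * Real.sqrt (1 - δ) - Real.sqrt (1 - q ^ 2) * Real.sqrt δ : ℝ) : ℂ) := by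
        rw [hin2, h0, h1]
        rw [map_mul, map_mul, Complex.conj_ofReal, map_neg, Complex.conj_ofReal]
        rw [mul_assoc, mul_assoc, hcu, hcv, habs0, habs1']
        push_cast
        ring
      rw [hval, hmax, Complex.norm_real, Real.norm_eq_abs, sq_abs]
    · intro h; exact absurd hcase (not_lt.mpr h)
    · intro _; rw [hmax]
end

section
/- Let δ ∈ [0,1], φ ∈ ℝ, and i ∈ {0,1}. For the certification of quantum states with null hypothesis e_i and alternative hypothesis U_φ e_i, the minimum of |⟨ω, U_φ e_i⟩|² over all unit vectors ω ∈ ℂ² with |⟨e_i, ω⟩|² ≥ 1 − δ equals ( (|1+e^{iφ}|/2)·√(1−δ) − √(1 − |1+e^{iφ}|²/4)·√δ )² if |1+e^{iφ}|/2 > √δ, and equals 0 if |1+e^{iφ}|/2 ≤ √δ. -/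
open scoped InnerProductSpace Matrix

noncomputable def Hmat : Matrix (Fin 2) (Fin 2) ℂ :=
  ((1 / Real.sqrt 2 : ℝ) : ℂ) • !![1, 1; 1, -1]

noncomputable def Uphi (φ : ℝ) : Matrix (Fin 2) (Fin 2) ℂ :=
  Hmat * !![1, 0; 0, Complex.exp (φ * Complex.I)] * Hmatᴴ

noncomputable def Complex.abs : AbsoluteValue ℂ ℝ where
  toFun z := ‖z‖
  map_mul' := norm_mul
  nonneg' := norm_nonneg
  eq_zero' _ := norm_eq_zero
  add_le' := norm_add_le

lemma Complex.abs_apply (z : ℂ) : Complex.abs z = ‖z‖ := rfl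

lemma Complex.abs_ofReal (r : ℝ) : Complex.abs (r : ℂ) = |r| := by
  simp [Complex.abs_apply]

lemma Complex.abs_conj (z : ℂ) : Complex.abs (starRingEnd ℂ z) = Complex.abs z := by
  simp [Complex.abs_apply]

lemma Complex.normSq_eq_abs (z : ℂ) : Complex.normSq z = Complex.abs z ^ 2 := by
  simp [Complex.abs_apply, Complex.normSq_eq_norm_sq]

lemma Complex.norm_eq_abs (z : ℂ) : ‖z‖ = Complex.abs z := rfl

lemma Complex.abs_exp_ofReal_mul_I (x : ℝ) : Complex.abs (Complex.exp (x * Complex.I)) = 1 := by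
  simp [Complex.abs_apply]

lemma absr' (x : ℝ) : Complex.abs ((x:ℂ)) ^ 2 = x ^ 2 := by
  rw [Complex.abs_ofReal, sq_abs]

lemma abs_rsmul' (r : ℝ) (hr : 0 ≤ r) (z : ℂ) :
    Complex.abs ((r:ℂ) * z) = r * Complex.abs z := by
  rw [map_mul, Complex.abs_ofReal, abs_of_nonneg hr]

lemma conj_rsmul_mul' (r : ℝ) (z : ℂ) (hz : z ≠ 0) :
    starRingEnd ℂ (((r / Complex.abs z : ℝ) : ℂ) * z) * z
      = ((r * Complex.abs z : ℝ) : ℂ) := by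
  have hz0 : ((Complex.abs z : ℝ) : ℂ) ≠ 0 := by
    simpa [Complex.abs.ne_zero_iff] using hz
  rw [map_mul, Complex.conj_ofReal, mul_assoc]
  rw [show (starRingEnd ℂ) z * z = z * (starRingEnd ℂ) z by ring, Complex.mul_conj]
  rw [Complex.normSq_eq_abs]
  push_cast
  field_simp

lemma lb' (δ : ℝ) (h0 : 0 ≤ δ) (h1 : δ ≤ 1) (u v a b : ℂ)
    (huv : Complex.abs u ^ 2 + Complex.abs v ^ 2 = 1)
    (hab : Complex.abs a ^ 2 + Complex.abs b ^ 2 = 1)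
    (ha : Complex.abs a ^ 2 ≥ 1 - δ)
    (hc : Real.sqrt δ < Complex.abs u) :
    (Complex.abs u * Real.sqrt (1 - δ) - Complex.abs v * Real.sqrt δ) ^ 2
      ≤ Complex.abs (starRingEnd ℂ a * u + starRingEnd ℂ b * v) ^ 2 := by
  have hd0 : Real.sqrt δ ^ 2 = δ := Real.sq_sqrt h0
  have hd1 : Real.sqrt (1 - δ) ^ 2 = 1 - δ := Real.sq_sqrt (by linarith)
  have haa : Real.sqrt (1 - δ) ≤ Complex.abs a := by
    have : Real.sqrt (1 - δ) ≤ Real.sqrt (Complex.abs a ^ 2) := Real.sqrt_le_sqrt ha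
    rwa [Real.sqrt_sq (Complex.abs.nonneg a)] at this
  have hbb : Complex.abs b ≤ Real.sqrt δ := by
    have h2 : Complex.abs b ^ 2 ≤ δ := by nlinarith
    have : Real.sqrt (Complex.abs b ^ 2) ≤ Real.sqrt δ := Real.sqrt_le_sqrt h2
    rwa [Real.sqrt_sq (Complex.abs.nonneg b)] at this
  have hu2 : δ < Complex.abs u ^ 2 := by
    calc δ = Real.sqrt δ ^ 2 := hd0.symm
    _ < Complex.abs u ^ 2 := by
        exact pow_lt_pow_left₀ hc (Real.sqrt_nonneg δ) (by norm_num)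
  have hvv : Complex.abs v ≤ Real.sqrt (1 - δ) := by
    have h2 : Complex.abs v ^ 2 ≤ 1 - δ := by nlinarith
    have : Real.sqrt (Complex.abs v ^ 2) ≤ Real.sqrt (1 - δ) := Real.sqrt_le_sqrt h2
    rwa [Real.sqrt_sq (Complex.abs.nonneg v)] at this
  set m := Complex.abs u * Real.sqrt (1 - δ) - Complex.abs v * Real.sqrt δ with hm
  have hm0 : 0 ≤ m := by
    have t1 := mul_le_mul_of_nonneg_right hvv (Real.sqrt_nonneg δ)
    have t2 := mul_le_mul_of_nonneg_right hc.le (Real.sqrt_nonneg (1 - δ))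
    rw [hm]; nlinarith
  have key : m ≤ Complex.abs (starRingEnd ℂ a * u + starRingEnd ℂ b * v) := by
    have htri : Complex.abs (starRingEnd ℂ a * u) - Complex.abs (starRingEnd ℂ b * v)
        ≤ Complex.abs (starRingEnd ℂ a * u + starRingEnd ℂ b * v) := by
      have h4 := Complex.abs.add_le (starRingEnd ℂ a * u + starRingEnd ℂ b * v)
        (-(starRingEnd ℂ b * v))
      rw [add_neg_cancel_right] at h4
      rw [Complex.abs.map_neg] at h4
      linarith
    rw [map_mul, map_mul, Complex.abs_conj, Complex.abs_conj] at htri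
    have t1 := mul_le_mul_of_nonneg_right haa (Complex.abs.nonneg u)
    have t2 := mul_le_mul_of_nonneg_right hbb (Complex.abs.nonneg v)
    rw [hm]; nlinarith
  exact pow_le_pow_left₀ hm0 key 2

lemma memb' (δ : ℝ) (h0 : 0 ≤ δ) (h1 : δ ≤ 1) (u v : ℂ)
    (huv : Complex.abs u ^ 2 + Complex.abs v ^ 2 = 1) :
    (if Real.sqrt δ < Complex.abs u then
        (Complex.abs u * Real.sqrt (1 - δ) - Complex.abs v * Real.sqrt δ) ^ 2 else 0)
    ∈ {t : ℝ | ∃ a b : ℂ, Complex.abs a ^ 2 + Complex.abs b ^ 2 = 1 ∧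
        Complex.abs a ^ 2 ≥ 1 - δ ∧
        t = Complex.abs (starRingEnd ℂ a * u + starRingEnd ℂ b * v) ^ 2} := by
  have hd0 : Real.sqrt δ ^ 2 = δ := Real.sq_sqrt h0
  have hd1 : Real.sqrt (1 - δ) ^ 2 = 1 - δ := Real.sq_sqrt (by linarith)
  by_cases hc : Real.sqrt δ < Complex.abs u
  · rw [if_pos hc]
    have hu0 : (0:ℝ) < Complex.abs u := lt_of_le_of_lt (Real.sqrt_nonneg δ) hc
    have hu : u ≠ 0 := by
      intro h; rw [h] at hu0; simp at hu0
    have habsa : Complex.abs (((Real.sqrt (1 - δ) / Complex.abs u : ℝ) : ℂ) * u)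
        = Real.sqrt (1 - δ) := by
      rw [abs_rsmul' _ (by positivity)]
      field_simp
    have habsb : Complex.abs (if v = 0 then ((Real.sqrt δ : ℝ) : ℂ)
          else -(((Real.sqrt δ / Complex.abs v : ℝ) : ℂ) * v)) = Real.sqrt δ := by
      by_cases hv : v = 0
      · rw [if_pos hv, Complex.abs_ofReal, abs_of_nonneg (Real.sqrt_nonneg δ)]
      · rw [if_neg hv, Complex.abs.map_neg, abs_rsmul' _ (by positivity)]
        have hv0 : Complex.abs v ≠ 0 := by simpa using hv
        field_simp
    refine ⟨((Real.sqrt (1 - δ) / Complex.abs u : ℝ) : ℂ) * u,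
        if v = 0 then ((Real.sqrt δ : ℝ) : ℂ)
          else -(((Real.sqrt δ / Complex.abs v : ℝ) : ℂ) * v), ?_, ?_, ?_⟩
    · rw [habsa, habsb, hd0, hd1]; ring
    · rw [habsa, hd1]
    · have h2' : starRingEnd ℂ (if v = 0 then ((Real.sqrt δ : ℝ) : ℂ)
            else -(((Real.sqrt δ / Complex.abs v : ℝ) : ℂ) * v)) * v
          = ((-(Real.sqrt δ * Complex.abs v) : ℝ) : ℂ) := by
        by_cases hv : v = 0
        · simp [hv]
        · rw [if_neg hv, map_neg, neg_mul, conj_rsmul_mul' _ _ hv]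
          push_cast; ring
      rw [conj_rsmul_mul' _ _ hu, h2', ← Complex.ofReal_add, absr']
      ring
  · rw [if_neg hc]
    push_neg at hc
    by_cases hu : u = 0
    · exact ⟨1, 0, by simp, by simp; linarith, by simp [hu]⟩
    · have hu0 : (0:ℝ) < Complex.abs u := by simpa [Complex.abs.pos_iff] using hu
      have hud : Complex.abs u ^ 2 ≤ δ := by
        calc Complex.abs u ^ 2 ≤ Real.sqrt δ ^ 2 :=
              pow_le_pow_left₀ (Complex.abs.nonneg u) hc 2
        _ = δ := hd0
      have habsa : Complex.abs (((Complex.abs v / Complex.abs u : ℝ) : ℂ) * u)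
          = Complex.abs v := by
        rw [abs_rsmul' _ (by positivity)]
        field_simp
      have habsb : Complex.abs (if v = 0 then ((Complex.abs u : ℝ) : ℂ)
            else -(((Complex.abs u / Complex.abs v : ℝ) : ℂ) * v)) = Complex.abs u := by
        by_cases hv : v = 0
        · rw [if_pos hv, Complex.abs_ofReal, abs_of_nonneg (Complex.abs.nonneg u)]
        · rw [if_neg hv, Complex.abs.map_neg, abs_rsmul' _ (by positivity)]
          have hv0 : Complex.abs v ≠ 0 := by simpa using hv
          field_simp
      refine ⟨((Complex.abs v / Complex.abs u : ℝ) : ℂ) * u,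
          if v = 0 then ((Complex.abs u : ℝ) : ℂ)
            else -(((Complex.abs u / Complex.abs v : ℝ) : ℂ) * v), ?_, ?_, ?_⟩
      · rw [habsa, habsb]; linarith
      · rw [habsa]; nlinarith
      · have h2' : starRingEnd ℂ (if v = 0 then ((Complex.abs u : ℝ) : ℂ)
              else -(((Complex.abs u / Complex.abs v : ℝ) : ℂ) * v)) * v
            = ((-(Complex.abs u * Complex.abs v) : ℝ) : ℂ) := by
          by_cases hv : v = 0
          · simp [hv]
          · rw [if_neg hv, map_neg, neg_mul, conj_rsmul_mul' _ _ hv]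
            push_cast; ring
        rw [conj_rsmul_mul' _ _ hu, h2', ← Complex.ofReal_add, absr']
        ring

lemma aux' (δ : ℝ) (h0 : 0 ≤ δ) (h1 : δ ≤ 1) (u v : ℂ)
    (huv : Complex.abs u ^ 2 + Complex.abs v ^ 2 = 1) :
    IsLeast {t : ℝ | ∃ a b : ℂ, Complex.abs a ^ 2 + Complex.abs b ^ 2 = 1 ∧
        Complex.abs a ^ 2 ≥ 1 - δ ∧
        t = Complex.abs (starRingEnd ℂ a * u + starRingEnd ℂ b * v) ^ 2}
      (if Real.sqrt δ < Complex.abs u then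
        (Complex.abs u * Real.sqrt (1 - δ) - Complex.abs v * Real.sqrt δ) ^ 2 else 0) := by
  constructor
  · exact memb' δ h0 h1 u v huv
  · rintro t ⟨a, b, hab, ha, rfl⟩
    split_ifs with hc
    · exact lb' δ h0 h1 u v a b huv hab ha hc
    · positivity

lemma Uphi_eq (φ : ℝ) : Uphi φ
    = !![(1 + Complex.exp (φ * Complex.I))/2, (1 - Complex.exp (φ * Complex.I))/2;
        (1 - Complex.exp (φ * Complex.I))/2, (1 + Complex.exp (φ * Complex.I))/2] := by
  have h3 : ((Real.sqrt 2 : ℝ) : ℂ)⁻¹ * ((Real.sqrt 2 : ℝ) : ℂ)⁻¹ = 1/2 := by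
    rw [← mul_inv, ← Complex.ofReal_mul, Real.mul_self_sqrt (by norm_num)]
    norm_num
  ext k l
  fin_cases k <;> fin_cases l <;>
    simp [Uphi, Hmat, Matrix.mul_apply, Fin.sum_univ_two, Matrix.conjTranspose_apply,
      Complex.conj_ofReal]
  · linear_combination (1 + Complex.exp (φ * Complex.I)) * h3
  · linear_combination (1 - Complex.exp (φ * Complex.I)) * h3
  · linear_combination (1 - Complex.exp (φ * Complex.I)) * h3
  · linear_combination (1 + Complex.exp (φ * Complex.I)) * h3

lemma psi_apply (φ : ℝ) (i k : Fin 2) :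
    (Uphi φ).mulVec (e i) k
      = if k = i then (1 + Complex.exp (φ * Complex.I))/2
        else (1 - Complex.exp (φ * Complex.I))/2 := by
  fin_cases i <;> fin_cases k <;>
    simp [Uphi_eq, Matrix.mulVec, dotProduct, Fin.sum_univ_two, e,
      EuclideanSpace.single_apply]

lemma norm_one_iff' (ω : EuclideanSpace ℂ (Fin 2)) :
    ‖ω‖ = 1 ↔ Complex.abs (ω 0) ^ 2 + Complex.abs (ω 1) ^ 2 = 1 := by
  rw [EuclideanSpace.norm_eq, Real.sqrt_eq_one, Fin.sum_univ_two,
    Complex.norm_eq_abs, Complex.norm_eq_abs]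

theorem stmt2 (δ : ℝ) (hδ : δ ∈ Set.Icc (0:ℝ) 1) (φ : ℝ) (i : Fin 2) :
    IsLeast
      {t : ℝ | ∃ ω : EuclideanSpace ℂ (Fin 2), ‖ω‖ = 1 ∧
        (‖⟪e i, ω⟫_ℂ‖) ^ 2 ≥ 1 - δ ∧
        t = (‖⟪ω, (WithLp.toLp 2 ((Uphi φ).mulVec (e i)) : EuclideanSpace ℂ (Fin 2))⟫_ℂ‖) ^ 2}
      (if Real.sqrt δ < ‖1 + Complex.exp (φ * Complex.I)‖ / 2 then
        (‖1 + Complex.exp (φ * Complex.I)‖ / 2 * Real.sqrt (1 - δ) -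
          Real.sqrt (1 - (‖1 + Complex.exp (φ * Complex.I)‖) ^ 2 / 4) *
            Real.sqrt δ) ^ 2
      else 0) := by
  obtain ⟨h0, h1⟩ := hδ
  change IsLeast
      {t : ℝ | ∃ ω : EuclideanSpace ℂ (Fin 2), ‖ω‖ = 1 ∧
        (Complex.abs ⟪e i, ω⟫_ℂ) ^ 2 ≥ 1 - δ ∧
        t = (Complex.abs ⟪ω, (WithLp.toLp 2 ((Uphi φ).mulVec (e i)) : EuclideanSpace ℂ (Fin 2))⟫_ℂ) ^ 2}
      (if Real.sqrt δ < Complex.abs (1 + Complex.exp (φ * Complex.I)) / 2 then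
        (Complex.abs (1 + Complex.exp (φ * Complex.I)) / 2 * Real.sqrt (1 - δ) -
          Real.sqrt (1 - (Complex.abs (1 + Complex.exp (φ * Complex.I))) ^ 2 / 4) *
            Real.sqrt δ) ^ 2
      else 0)
  set E : ℂ := Complex.exp (φ * Complex.I) with hEdef
  have hE : Complex.abs E = 1 := Complex.abs_exp_ofReal_mul_I φ
  set u : ℂ := (1 + E)/2 with hudef
  set v : ℂ := (1 - E)/2 with hvdef
  have habs4 : Complex.abs (1 + E) ^ 2 + Complex.abs (1 - E) ^ 2 = 4 := by
    have hp := parallelogram_law_with_norm ℂ (1 : ℂ) E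
    simp only [Complex.norm_eq_abs] at hp
    have h1' : Complex.abs (1 : ℂ) = 1 := by simp
    nlinarith [hp]
  have hu : Complex.abs u = Complex.abs (1 + E) / 2 := by
    rw [hudef, map_div₀]; norm_num [Complex.abs_apply]
  have hv : Complex.abs v = Complex.abs (1 - E) / 2 := by
    rw [hvdef, map_div₀]; norm_num [Complex.abs_apply]
  have huv : Complex.abs u ^ 2 + Complex.abs v ^ 2 = 1 := by
    rw [hu, hv, div_pow, div_pow]; linarith
  have hvs : Real.sqrt (1 - Complex.abs (1 + E) ^ 2 / 4) = Complex.abs v := by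
    have h5 : 1 - Complex.abs (1 + E) ^ 2 / 4 = Complex.abs v ^ 2 := by
      rw [hv, div_pow]; linarith
    rw [h5, Real.sqrt_sq (Complex.abs.nonneg v)]
  have hval : (if Real.sqrt δ < Complex.abs (1 + E) / 2 then
        (Complex.abs (1 + E) / 2 * Real.sqrt (1 - δ) -
          Real.sqrt (1 - (Complex.abs (1 + E)) ^ 2 / 4) * Real.sqrt δ) ^ 2
      else 0)
      = (if Real.sqrt δ < Complex.abs u then
        (Complex.abs u * Real.sqrt (1 - δ) - Complex.abs v * Real.sqrt δ) ^ 2 else 0) := by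
    rw [hu, hvs]
  rw [hval]
  have hset : {t : ℝ | ∃ ω : EuclideanSpace ℂ (Fin 2), ‖ω‖ = 1 ∧
        (Complex.abs ⟪e i, ω⟫_ℂ) ^ 2 ≥ 1 - δ ∧
        t = (Complex.abs ⟪ω, (WithLp.toLp 2 ((Uphi φ).mulVec (e i)) : EuclideanSpace ℂ (Fin 2))⟫_ℂ) ^ 2}
      = {t : ℝ | ∃ a b : ℂ, Complex.abs a ^ 2 + Complex.abs b ^ 2 = 1 ∧
        Complex.abs a ^ 2 ≥ 1 - δ ∧
        t = Complex.abs (starRingEnd ℂ a * u + starRingEnd ℂ b * v) ^ 2} := by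
    ext t
    simp only [Set.mem_setOf_eq]
    fin_cases i <;>
      simp only [Fin.zero_eta, Fin.mk_one, Fin.isValue]
    · constructor
      · rintro ⟨ω, hn, hcon, rfl⟩
        refine ⟨ω 0, ω 1, (norm_one_iff' ω).mp hn, ?_, ?_⟩
        · rw [show ⟪e 0, ω⟫_ℂ = ω 0 by simp [e, EuclideanSpace.inner_single_left]] at hcon
          exact hcon
        · rw [PiLp.inner_apply, Fin.sum_univ_two]
          simp only [RCLike.inner_apply]
          rw [psi_apply φ 0 0, psi_apply φ 0 1]
          norm_num
          rw [hudef, hvdef, hEdef]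
          congr 1
          ring
      · rintro ⟨a, b, hab, ha, rfl⟩
        refine ⟨(WithLp.equiv 2 (Fin 2 → ℂ)).symm ![a, b], ?_, ?_, ?_⟩
        · rw [norm_one_iff']
          simpa [WithLp.equiv_symm_apply, PiLp.toLp_apply] using hab
        · rw [show ⟪e 0, (WithLp.equiv 2 (Fin 2 → ℂ)).symm ![a, b]⟫_ℂ = a by
            simp [e, EuclideanSpace.inner_single_left, WithLp.equiv_symm_apply, PiLp.toLp_apply]]
          exact ha
        · rw [PiLp.inner_apply, Fin.sum_univ_two]
          simp only [RCLike.inner_apply]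
          rw [psi_apply φ 0 0, psi_apply φ 0 1]
          simp [WithLp.equiv_symm_apply, PiLp.toLp_apply]
          rw [hudef, hvdef, hEdef]
          congr 1
          ring
    · constructor
      · rintro ⟨ω, hn, hcon, rfl⟩
        refine ⟨ω 1, ω 0, ?_, ?_, ?_⟩
        · have := (norm_one_iff' ω).mp hn; linarith
        · rw [show ⟪e 1, ω⟫_ℂ = ω 1 by simp [e, EuclideanSpace.inner_single_left]] at hcon
          exact hcon
        · rw [PiLp.inner_apply, Fin.sum_univ_two]
          simp only [RCLike.inner_apply]
          rw [psi_apply φ 1 0, psi_apply φ 1 1]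
          norm_num
          rw [hudef, hvdef]
          congr 1
          ring
      · rintro ⟨a, b, hab, ha, rfl⟩
        refine ⟨(WithLp.equiv 2 (Fin 2 → ℂ)).symm ![b, a], ?_, ?_, ?_⟩
        · rw [norm_one_iff']
          simp only [WithLp.equiv_symm_apply, PiLp.toLp_apply]
          simp only [Matrix.cons_val_zero, Matrix.cons_val_one, Matrix.head_cons]
          linarith
        · rw [show ⟪e 1, (WithLp.equiv 2 (Fin 2 → ℂ)).symm ![b, a]⟫_ℂ = a by
            simp [e, EuclideanSpace.inner_single_left, WithLp.equiv_symm_apply, PiLp.toLp_apply]]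
          exact ha
        · rw [PiLp.inner_apply, Fin.sum_univ_two]
          simp only [RCLike.inner_apply]
          rw [psi_apply φ 1 0, psi_apply φ 1 1]
          simp [WithLp.equiv_symm_apply, PiLp.toLp_apply]
          rw [hudef, hvdef, hEdef]
          congr 1
          ring_nf
  rw [hset]
  exact aux' δ h0 h1 u v huv
end

section
/- Let δ ∈ [0, 1/2). For the certification of the measurement in the Hadamard basis, i.e. null hypothesis e₀ and alternative hypothesis H·e₀ = (e₀ + e₁)/√2, the minimum of |⟨ω, H·e₀⟩|² over all unit vectors ω ∈ ℂ² with |⟨e₀, ω⟩|² ≥ 1 − δ equals (1/2)·(√(1−δ) − √δ)². -/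
open scoped InnerProductSpace Matrix
lemma inner_e0 (ω : EuclideanSpace ℂ (Fin 2)) : ⟪e 0, ω⟫_ℂ = ω 0 := by
  simp [e, EuclideanSpace.inner_single_left]

lemma inner_H (ω : EuclideanSpace ℂ (Fin 2)) :
    ⟪ω, (WithLp.toLp 2 (Hmat.mulVec (e 0)) : EuclideanSpace ℂ (Fin 2))⟫_ℂ
      = ((1 / Real.sqrt 2 : ℝ) : ℂ) * (starRingEnd ℂ) (ω 0 + ω 1) := by
  have h : ∀ i : Fin 2, (WithLp.toLp 2 (Hmat.mulVec (e 0)) : EuclideanSpace ℂ (Fin 2)) i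
      = ((1 / Real.sqrt 2 : ℝ) : ℂ) := by
    intro i
    fin_cases i <;>
    simp [Hmat, e, Matrix.mulVec, dotProduct, EuclideanSpace.single_apply,
      Fin.sum_univ_two]
  rw [PiLp.inner_apply, Fin.sum_univ_two, h 0, h 1]
  simp [RCLike.inner_apply]
  ring

lemma absH (ω : EuclideanSpace ℂ (Fin 2)) :
    ‖⟪ω, (WithLp.toLp 2 (Hmat.mulVec (e 0)) : EuclideanSpace ℂ (Fin 2))⟫_ℂ‖ ^ 2
      = (1/2) * ‖ω 0 + ω 1‖ ^ 2 := by
  rw [inner_H, norm_mul, mul_pow, Complex.norm_conj]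
  rw [Complex.norm_real, Real.norm_of_nonneg (by positivity)]
  rw [div_pow, one_pow, Real.sq_sqrt (by norm_num)]

lemma norm_sq_sum (ω : EuclideanSpace ℂ (Fin 2)) :
    ‖ω‖ ^ 2 = ‖ω 0‖ ^ 2 + ‖ω 1‖ ^ 2 := by
  rw [EuclideanSpace.norm_eq, Real.sq_sqrt (by positivity)]
  simp [Fin.sum_univ_two]

theorem stmt17 (δ : ℝ) (hδ : δ ∈ Set.Ico (0:ℝ) (1 / 2)) :
    IsLeast
      {t : ℝ | ∃ ω : EuclideanSpace ℂ (Fin 2), ‖ω‖ = 1 ∧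
        ‖⟪e 0, ω⟫_ℂ‖ ^ 2 ≥ 1 - δ ∧
        t = ‖⟪ω, (WithLp.toLp 2 (Hmat.mulVec (e 0)) : EuclideanSpace ℂ (Fin 2))⟫_ℂ‖ ^ 2}
      ((1 / 2) * (Real.sqrt (1 - δ) - Real.sqrt δ) ^ 2) := by
  obtain ⟨h0, h1⟩ := hδ
  have h1δ : (0:ℝ) ≤ 1 - δ := by linarith
  have hsa : (0:ℝ) ≤ Real.sqrt (1 - δ) := Real.sqrt_nonneg _
  have hsb : (0:ℝ) ≤ Real.sqrt δ := Real.sqrt_nonneg _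
  have hba : Real.sqrt δ ≤ Real.sqrt (1 - δ) := Real.sqrt_le_sqrt (by linarith)
  constructor
  · refine ⟨(WithLp.equiv 2 (Fin 2 → ℂ)).symm
      ![(Real.sqrt (1 - δ) : ℂ), -(Real.sqrt δ : ℂ)], ?_, ?_, ?_⟩
    · rw [show (1:ℝ) = Real.sqrt 1 by simp, EuclideanSpace.norm_eq]
      congr 1
      simp [Fin.sum_univ_two, Complex.norm_real,
        abs_of_nonneg hsa, abs_of_nonneg hsb, Real.sq_sqrt h1δ, Real.sq_sqrt h0]
    · rw [inner_e0]
      simp [Complex.norm_real, abs_of_nonneg hsa, Real.sq_sqrt h1δ]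
    · rw [absH]
      have : ((WithLp.equiv 2 (Fin 2 → ℂ)).symm
          ![(Real.sqrt (1 - δ) : ℂ), -(Real.sqrt δ : ℂ)]) 0
          + ((WithLp.equiv 2 (Fin 2 → ℂ)).symm
          ![(Real.sqrt (1 - δ) : ℂ), -(Real.sqrt δ : ℂ)]) 1
          = ((Real.sqrt (1 - δ) - Real.sqrt δ : ℝ) : ℂ) := by
        simp [Complex.ofReal_sub, sub_eq_add_neg]
      rw [this, Complex.norm_real, Real.norm_eq_abs, sq_abs]
  · rintro t ⟨ω, hnorm, hge, rfl⟩
    rw [absH]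
    rw [inner_e0] at hge
    set a := ‖ω 0‖ with ha
    set b := ‖ω 1‖ with hb
    have hab : a ^ 2 + b ^ 2 = 1 := by
      rw [← norm_sq_sum, hnorm]; norm_num
    have ha0 : 0 ≤ a := norm_nonneg _
    have hb0 : 0 ≤ b := norm_nonneg _
    have haa : Real.sqrt (1 - δ) ≤ a := by
      rw [show a = Real.sqrt (a ^ 2) by rw [Real.sqrt_sq ha0]]
      exact Real.sqrt_le_sqrt hge
    have hbb : b ≤ Real.sqrt δ := by
      rw [show b = Real.sqrt (b ^ 2) by rw [Real.sqrt_sq hb0]]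
      exact Real.sqrt_le_sqrt (by nlinarith)
    have htri : a - b ≤ ‖ω 0 + ω 1‖ := by
      calc a - b = ‖(ω 0 + ω 1) - ω 1‖ - ‖ω 1‖ := by
            simp [ha, hb]
        _ ≤ ‖ω 0 + ω 1‖ := by
            have h' : ‖(ω 0 + ω 1) - ω 1‖ ≤
                ‖ω 0 + ω 1‖ + ‖ω 1‖ := by
              simpa using norm_add_le (ω 0 + ω 1) (-(ω 1))
            linarith
    have hkey : Real.sqrt (1 - δ) - Real.sqrt δ ≤ ‖ω 0 + ω 1‖ := by
      linarith
    have hpos : 0 ≤ Real.sqrt (1 - δ) - Real.sqrt δ := by linarith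
    have := pow_le_pow_left₀ hpos hkey 2
    linarith
end
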